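/- Let γ₀ < γ₁ be real numbers and w : [γ₀, γ₁] → ℝ continuous. For every strictly increasing C¹ function γ : [0,1] → [γ₀, γ₁] with γ(0) = γ₀ and γ(1) = γ₁, one has ∫₀¹ (1/2)·γ'(t)·w(γ(t)) dt = (1/2)∫_{γ₀}^{γ₁} w(γ) dγ. In particular, the expected diffusion loss E_{t∼Uniform[0,1]}[ℓ(t)] depends only on the endpoints γ₀, γ₁ and is invariant to the interior shape of the schedule γ. -/

import Mathlib

open Set MeasureTheory intervalIntegral

/-- **Schedule-shape invariance of the expected diffusion loss.**
Let `γ₀ < γ₁` and `w` continuous on `[γ₀,γ₁]`.  For every strictly increasing C¹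
schedule `γ : [0,1] → [γ₀,γ₁]` with `γ(0) = γ₀`, `γ(1) = γ₁` (with derivative `γ'`),
`∫₀¹ (1/2) γ'(t) w(γ(t)) dt = (1/2)∫_{γ₀}^{γ₁} w(x) dx`; in particular the expected
diffusion loss `E_{t∼U[0,1]}[ℓ(t)]` depends only on the endpoints. -/
theorem expected_diffusion_loss_shape_invariant
    (γ₀ γ₁ : ℝ) (hγ : γ₀ < γ₁) (w : ℝ → ℝ)
    (hw_cont : ContinuousOn w (Icc γ₀ γ₁))
    (γ γ' : ℝ → ℝ)
    (hC1 : ∀ t ∈ Icc (0:ℝ) 1, HasDerivWithinAt γ (γ' t) (Icc (0:ℝ) 1) t)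
    (hγ'cont : ContinuousOn γ' (Icc (0:ℝ) 1))
    (hmono : StrictMonoOn γ (Icc (0:ℝ) 1))
    (hmaps : MapsTo γ (Icc (0:ℝ) 1) (Icc γ₀ γ₁))
    (h0 : γ 0 = γ₀) (h1 : γ 1 = γ₁) :
    ∫ t in (0:ℝ)..1, (1 / 2) * γ' t * w (γ t) = (1 / 2) * ∫ x in γ₀..γ₁, w x := by
  have huIcc : (Set.uIcc (0:ℝ) 1) = Icc (0:ℝ) 1 := uIcc_of_le zero_le_one
  have hγcont : ContinuousOn γ (Set.uIcc (0:ℝ) 1) := by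
    rw [huIcc]; exact fun t ht => (hC1 t ht).continuousWithinAt
  have hkey : (∫ t in (0:ℝ)..1, γ' t • (w ∘ γ) t) = ∫ u in (γ 0)..(γ 1), w u := by
    apply integral_comp_smul_deriv'' hγcont
    · intro x hx
      simp only [min_eq_left zero_le_one, max_eq_right zero_le_one] at hx
      exact (hC1 x (Ioo_subset_Icc_self hx)).mono_of_mem_nhdsWithin
        (Icc_mem_nhdsGT_of_mem ⟨le_of_lt hx.1, hx.2⟩)
    · rw [huIcc]; exact hγ'cont
    · refine hw_cont.mono ?_
      rw [huIcc]; exact image_subset_iff.mpr hmaps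
  have : (∫ t in (0:ℝ)..1, (1 / 2) * γ' t * w (γ t))
      = (1/2) * ∫ t in (0:ℝ)..1, γ' t * w (γ t) := by
    rw [← intervalIntegral.integral_const_mul]
    congr 1; ext t; ring
  rw [this]
  simp only [Function.comp, smul_eq_mul] at hkey
  rw [hkey, h0, h1]
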